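/- Let G be a finite connected simple graph with at least 5 vertices. Then there exist a proper coloring c of G and an up-color dominating c-set D of G with weight Σ_{v∈D} c(v) at most χ(G) − 1 if and only if G has a vertex whose closed neighborhood is the whole vertex set of G (i.e., G is a cone graph). -/
import Mathlib


/-- `D` is an up-color dominating `c`-set of `G`. -/
def IsUCDomSet {V : Type*} (G : SimpleGraph V) (c : V → ℕ) (D : Finset V) : Prop :=
  (∀ v ∉ D, ∃ d ∈ D, G.Adj v d ∧ c v < c d) ∧ ∀ d ∈ D, 1 ≤ c d

/-- The chromatic number of `G` (as a natural number). -/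
noncomputable def chromNum {V : Type*} (G : SimpleGraph V) : ℕ :=
  sInf {n | G.Colorable n}

theorem stmt_19 {V : Type*} [Fintype V] (G : SimpleGraph V)
    (hconn : G.Connected) (hcard : 5 ≤ Fintype.card V) :
    (∃ c : V → ℕ, (∀ ⦃u v⦄, G.Adj u v → c u ≠ c v) ∧
        ∃ D : Finset V, IsUCDomSet G c D ∧ ∑ v ∈ D, c v ≤ chromNum G - 1) ↔
      ∃ v : V, ∀ u : V, u = v ∨ G.Adj v u := by
  classical
  have hne : Nonempty V := Fintype.card_pos_iff.mp (by omega)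
  have hcol : G.Colorable (chromNum G) :=
    Nat.sInf_mem (⟨Fintype.card V, G.colorable_of_fintype⟩ : Set.Nonempty {n | G.Colorable n})
  constructor
  · rintro ⟨c, hc, D, ⟨hdom, hpos⟩, hw⟩
    -- D is nonempty
    have hDne : D.Nonempty := by
      by_contra h
      rw [Finset.not_nonempty_iff_eq_empty] at h
      obtain ⟨v⟩ := hne
      obtain ⟨d, hd, -⟩ := hdom v (by simp [h])
      simp [h] at hd
    obtain ⟨d0, hd0, hmax⟩ := D.exists_max_image c hDne
    -- every color is at most c d0
    have hub : ∀ u, c u ≤ c d0 := by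
      intro u
      by_cases hu : u ∈ D
      · exact hmax u hu
      · obtain ⟨d, hd, -, hlt⟩ := hdom u hu
        exact le_trans hlt.le (hmax d hd)
    -- G is (c d0 + 1)-colorable via c itself
    have hcolorable : G.Colorable (c d0 + 1) := by
      refine ⟨SimpleGraph.Coloring.mk (fun u => ⟨c u, Nat.lt_succ_of_le (hub u)⟩) ?_⟩
      intro u v huv h
      exact hc huv (congrArg Fin.val h)
    have hchrom : chromNum G ≤ c d0 + 1 := Nat.sInf_le hcolorable
    have hsum : ∑ v ∈ D, c v ≤ c d0 := le_trans hw (by omega)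
    -- D = {d0}
    have hsingle : ∀ d ∈ D, d = d0 := by
      intro d hd
      by_contra hne'
      have hsub : ({d, d0} : Finset V) ⊆ D := by
        intro x hx
        simp only [Finset.mem_insert, Finset.mem_singleton] at hx
        rcases hx with rfl | rfl <;> assumption
      have h2 : c d + c d0 ≤ ∑ v ∈ D, c v := by
        calc c d + c d0 = ∑ v ∈ ({d, d0} : Finset V), c v := by
              rw [Finset.sum_pair hne']
          _ ≤ ∑ v ∈ D, c v := Finset.sum_le_sum_of_subset hsub
      have := hpos d hd
      omega
    refine ⟨d0, fun u => ?_⟩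
    by_cases hu : u = d0
    · exact Or.inl hu
    · have huD : u ∉ D := fun h => hu (hsingle u h)
      obtain ⟨d, hd, hadj, -⟩ := hdom u huD
      rw [hsingle d hd] at hadj
      exact Or.inr hadj.symm
  · rintro ⟨v, hv⟩
    set n := chromNum G with hn
    obtain ⟨C⟩ := hcol
    -- get a neighbor of v, so n ≥ 2
    obtain ⟨w, hw⟩ := Fintype.exists_ne_of_one_lt_card (by omega) v
    have hadjw : G.Adj v w := (hv w).resolve_left hw
    have hCv : ∀ u, u ≠ v → C u ≠ C v := by
      intro u hu h
      exact C.valid ((hv u).resolve_left hu) h.symm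
    have hn2 : 2 ≤ n := by
      by_contra h
      have h1 : (C v : ℕ) < n := (C v).isLt
      have h2 : (C w : ℕ) < n := (C w).isLt
      exact hCv w hw (Fin.ext (by omega))
    -- the swapped coloring
    set c : V → ℕ := fun u =>
      if u = v then n - 1 else if (C u : ℕ) = n - 1 then (C v : ℕ) else (C u : ℕ) with hcdef
    have hcv : c v = n - 1 := by simp [hcdef]
    have hclt : ∀ u, u ≠ v → c u < n - 1 := by
      intro u hu
      have hlt : (C u : ℕ) < n := (C u).isLt
      have hvlt : (C v : ℕ) < n := (C v).isLt
      simp only [hcdef, if_neg hu]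
      by_cases h : (C u : ℕ) = n - 1
      · rw [if_pos h]
        have : (C v : ℕ) ≠ n - 1 := fun hh => hCv u hu (Fin.ext (by omega))
        omega
      · rw [if_neg h]; omega
    refine ⟨c, ?_, {v}, ⟨?_, ?_⟩, ?_⟩
    · intro a b hab h
      by_cases ha : a = v
      · have hb : b ≠ v := fun h' => G.ne_of_adj hab (ha.trans h'.symm)
        have := hclt b hb
        rw [ha, hcv] at h; omega
      · by_cases hb : b = v
        · have := hclt a ha
          rw [hb, hcv] at h; omega
        · -- both differ from v
          simp only [hcdef, if_neg ha, if_neg hb] at h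
          have hab' : C a ≠ C b := C.valid hab
          by_cases h1 : (C a : ℕ) = n - 1 <;> by_cases h2 : (C b : ℕ) = n - 1
          · exact hab' (Fin.ext (by omega))
          · rw [if_pos h1, if_neg h2] at h
            exact hCv b hb (Fin.ext h.symm)
          · rw [if_neg h1, if_pos h2] at h
            exact hCv a ha (Fin.ext h)
          · rw [if_neg h1, if_neg h2] at h
            exact hab' (Fin.ext h)
    · intro u hu
      simp only [Finset.mem_singleton] at hu
      refine ⟨v, Finset.mem_singleton_self v, ((hv u).resolve_left hu).symm, ?_⟩
      rw [hcv]; exact hclt u hu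
    · intro d hd
      simp only [Finset.mem_singleton] at hd
      subst hd; rw [hcv]; omega
    · rw [Finset.sum_singleton, hcv]
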